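/- For every integer k ≥ 1, one has 1 < δ_k < θ_k: the semitone always exceeds 1 and the tone strictly exceeds the semitone. -/

import Mathlib

/-- One step of the tone-breaking recursion, acting on `(θ, δ, T, D)`. -/
def musicStep (s : ℚ × ℚ × ℕ × ℕ) : ℚ × ℚ × ℕ × ℕ :=
  if s.1 < s.2.1 ^ 2 then (s.2.1, s.1 / s.2.1, s.2.2.1 + s.2.2.2, s.2.2.1)
  else (s.1 / s.2.1, s.2.1, s.2.2.1, s.2.2.1 + s.2.2.2)

/-- `music n` is the data `(θ_{n+1}, δ_{n+1}, T_{n+1}, D_{n+1})`. -/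
def music : ℕ → ℚ × ℚ × ℕ × ℕ
  | 0 => (3 / 2, 4 / 3, 1, 1)
  | n + 1 => musicStep (music n)

/-- the tone `θ_k` -/
def tone (k : ℕ) : ℚ := (music (k - 1)).1

/-- the semitone `δ_k` -/
def semitone (k : ℕ) : ℚ := (music (k - 1)).2.1

/-- the number of tones `T_k` -/
def numTones (k : ℕ) : ℕ := (music (k - 1)).2.2.1

/-- the number of semitones `D_k` -/
def numSemitones (k : ℕ) : ℕ := (music (k - 1)).2.2.2

/-- the number of notes `p_k = T_k + D_k` -/
def numNotes (k : ℕ) : ℕ := numTones k + numSemitones k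

lemma val_zpow (p : ℕ) [Fact p.Prime] {q : ℚ} (hq : q ≠ 0) (a : ℤ) :
    padicValRat p (q ^ a) = a * padicValRat p q := by
  cases a with
  | ofNat n => simp [padicValRat.pow q]
  | negSucc n =>
      rw [zpow_negSucc, padicValRat.inv, padicValRat.pow q]
      simp [Int.negSucc_eq]; ring

lemma key {a b : ℤ} (h : (2:ℚ)^a * 3^b = 1) : a = 0 ∧ b = 0 := by
  have h2 : (2:ℚ) ≠ 0 := by norm_num
  have h3 : (3:ℚ) ≠ 0 := by norm_num
  have hz2 : (2:ℚ)^a ≠ 0 := zpow_ne_zero _ h2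
  have hz3 : (3:ℚ)^b ≠ 0 := zpow_ne_zero _ h3
  haveI : Fact (Nat.Prime 2) := ⟨by norm_num⟩
  haveI : Fact (Nat.Prime 3) := ⟨by norm_num⟩
  have v2 := congrArg (padicValRat 2) h
  have v3 := congrArg (padicValRat 3) h
  rw [padicValRat.mul hz2 hz3, val_zpow 2 h2, val_zpow 2 h3, padicValRat.one] at v2
  rw [padicValRat.mul hz2 hz3, val_zpow 3 h2, val_zpow 3 h3, padicValRat.one] at v3
  have e23 : padicValRat 2 (3:ℚ) = 0 := by
    have : padicValNat 2 3 = 0 := padicValNat.eq_zero_of_not_dvd (by norm_num)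
    have := @padicValRat.of_nat 2 3
    simp_all
  have e32 : padicValRat 3 (2:ℚ) = 0 := by
    have : padicValNat 3 2 = 0 := padicValNat.eq_zero_of_not_dvd (by norm_num)
    have := @padicValRat.of_nat 3 2
    simp_all
  have e22 : padicValRat 2 (2:ℚ) = 1 := by
    have := padicValRat.self (p := 2) (by norm_num); simp_all
  have e33 : padicValRat 3 (3:ℚ) = 1 := by
    have := padicValRat.self (p := 3) (by norm_num); simp_all
  rw [e22, e23] at v2
  rw [e32, e33] at v3
  constructor <;> [linarith; linarith]

/-- The invariant: θ and δ are 3-smooth with unimodular exponent matrix, and 1 < δ < θ. -/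
def MusicInv (s : ℚ × ℚ × ℕ × ℕ) : Prop :=
  ∃ a b c d : ℤ, s.1 = 2^a * 3^b ∧ s.2.1 = 2^c * 3^d ∧
    (a * d - b * c = 1 ∨ a * d - b * c = -1) ∧ 1 < s.2.1 ∧ s.2.1 < s.1

lemma musicInv (n : ℕ) : MusicInv (music n) := by
  induction n with
  | zero =>
      refine ⟨-1, 1, 2, -1, ?_, ?_, by norm_num, ?_, ?_⟩ <;>
        norm_num [music, zpow_neg, zpow_one, zpow_two]
  | succ n ih =>
      obtain ⟨a, b, c, d, hθ, hδ, hdet, h1, h2⟩ := ih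
      have hδpos : (0:ℚ) < (music n).2.1 := by linarith
      have hδne : (music n).2.1 ≠ 0 := ne_of_gt hδpos
      have hquot : (music n).1 / (music n).2.1 = 2^(a-c) * 3^(b-d) := by
        rw [hθ, hδ, zpow_sub₀ (by norm_num), zpow_sub₀ (by norm_num)]
        field_simp
      have hne : (music n).1 ≠ (music n).2.1 ^ 2 := by
        intro heq
        rw [hθ, hδ] at heq
        have : (2:ℚ)^(a - 2*c) * 3^(b - 2*d) = 1 := by
          rw [zpow_sub₀ (by norm_num : (2:ℚ) ≠ 0), zpow_sub₀ (by norm_num : (3:ℚ) ≠ 0)]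
          have h2c : (2:ℚ)^(2*c) = ((2:ℚ)^c)^2 := by
            rw [← zpow_natCast ((2:ℚ)^c) 2, ← zpow_mul]; ring_nf
          have h3d : (3:ℚ)^(2*d) = ((3:ℚ)^d)^2 := by
            rw [← zpow_natCast ((3:ℚ)^d) 2, ← zpow_mul]; ring_nf
          rw [h2c, h3d]
          have hz2 : ((2:ℚ)^c)^2 ≠ 0 := pow_ne_zero _ (zpow_ne_zero _ (by norm_num))
          have hz3 : ((3:ℚ)^d)^2 ≠ 0 := pow_ne_zero _ (zpow_ne_zero _ (by norm_num))
          field_simp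
          rw [heq]; ring
        obtain ⟨ha, hb⟩ := key this
        have ha' : a = 2*c := by omega
        have hb' : b = 2*d := by omega
        have hzero : a*d - b*c = 0 := by rw [ha', hb']; ring
        rcases hdet with h | h <;> omega
      show MusicInv (musicStep (music n))
      unfold musicStep
      split_ifs with hlt
      · -- new state: (δ, θ/δ)
        refine ⟨c, d, a - c, b - d, hδ, hquot, ?_, ?_, ?_⟩
        · rcases hdet with h | h
          · right; linear_combination -h
          · left; linear_combination -h
        · show (1:ℚ) < (music n).1 / (music n).2.1
          rw [lt_div_iff₀ hδpos]; linarith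
        · show (music n).1 / (music n).2.1 < (music n).2.1
          rw [div_lt_iff₀ hδpos]; nlinarith [hlt]
      · -- new state: (θ/δ, δ)
        have hgt : (music n).2.1 ^ 2 < (music n).1 := lt_of_le_of_ne (not_lt.1 hlt) (Ne.symm hne)
        refine ⟨a - c, b - d, c, d, hquot, hδ, ?_, h1, ?_⟩
        · rcases hdet with h | h
          · left; linear_combination h
          · right; linear_combination h
        · show (music n).2.1 < (music n).1 / (music n).2.1
          rw [lt_div_iff₀ hδpos]; nlinarith [hgt]

/-- For every `k ≥ 1`, one has `1 < δ_k < θ_k`. -/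
theorem one_lt_semitone_lt_tone :
    ∀ k : ℕ, 1 ≤ k → 1 < semitone k ∧ semitone k < tone k := by
  intro k _
  obtain ⟨_, _, _, _, _, _, _, h1, h2⟩ := musicInv (k - 1)
  exact ⟨h1, h2⟩
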